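/- Let ν ≥ 1 be an integer and let λ, γ, μ be real numbers with γ ≠ 0 and μ ≠ 0. Define ι₂ : ℝ^ν → E, where E = EuclideanSpace ℝ (Fin ν × Fin 3), by ι₂(t)(i, 0) = λ·tᵢ, ι₂(t)(i, 1) = γ·cos(μ·tᵢ), ι₂(t)(i, 2) = γ·sin(μ·tᵢ). Then there exists C > 0 such that for every t ∈ ℝ^ν and every v ∈ ℝ^ν, ‖v‖² ≤ C·‖(iteratedFDeriv ℝ 2 ι₂ t)(v, v)‖ (one may take C = √ν / (|γ|·μ²)). -/

import Mathlib

/-- The scalar component functions of the coiling map. -/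
noncomputable def coilφ (l γ μ : ℝ) (j : Fin 3) (s : ℝ) : ℝ :=
  ![l * s, γ * Real.cos (μ * s), γ * Real.sin (μ * s)] j

lemma coilφ_contDiff (l γ μ : ℝ) (j : Fin 3) : ContDiff ℝ 2 (coilφ l γ μ j) := by
  fin_cases j <;> simp only [coilφ, Matrix.cons_val_zero, Matrix.cons_val_one, Matrix.head_cons,
    Matrix.cons_val_two, Matrix.tail_cons]
  · exact contDiff_const.mul contDiff_id
  · exact contDiff_const.mul ((Real.contDiff_cos).comp (contDiff_const.mul contDiff_id))
  · exact contDiff_const.mul ((Real.contDiff_sin).comp (contDiff_const.mul contDiff_id))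

lemma coilφ_iteratedDeriv (l γ μ : ℝ) (j : Fin 3) (s : ℝ) :
    iteratedDeriv 2 (coilφ l γ μ j) s =
      ![0, -(γ * μ ^ 2 * Real.cos (μ * s)), -(γ * μ ^ 2 * Real.sin (μ * s))] j := by
  have hd : ∀ x : ℝ, HasDerivAt (fun s : ℝ => μ * s) μ x := fun x => by
    simpa using (hasDerivAt_id x).const_mul μ
  have hcos : ∀ x : ℝ, HasDerivAt (fun s : ℝ => γ * Real.cos (μ * s))
      (-(γ * μ) * Real.sin (μ * x)) x := fun x => by
    have h : HasDerivAt (fun s : ℝ => Real.cos (μ * s)) (-Real.sin (μ * x) * μ) x :=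
      (Real.hasDerivAt_cos (μ * x)).comp x (hd x)
    simpa [mul_comm, mul_assoc, mul_left_comm] using h.const_mul γ
  have hsin : ∀ x : ℝ, HasDerivAt (fun s : ℝ => γ * Real.sin (μ * s))
      (γ * μ * Real.cos (μ * x)) x := fun x => by
    have h : HasDerivAt (fun s : ℝ => Real.sin (μ * s)) (Real.cos (μ * x) * μ) x :=
      (Real.hasDerivAt_sin (μ * x)).comp x (hd x)
    simpa [mul_comm, mul_assoc, mul_left_comm] using h.const_mul γ
  have e0 : coilφ l γ μ 0 = fun s => l * s := rfl
  have e1 : coilφ l γ μ 1 = fun s => γ * Real.cos (μ * s) := rfl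
  have e2 : coilφ l γ μ 2 = fun s => γ * Real.sin (μ * s) := rfl
  fin_cases j
  · show iteratedDeriv 2 (coilφ l γ μ 0) s = 0
    rw [e0, iteratedDeriv_succ, iteratedDeriv_one]
    have h1 : deriv (fun s : ℝ => l * s) = fun _ => l := by
      funext x; simpa using ((hasDerivAt_id x).const_mul l).deriv
    rw [h1]; simp
  · show iteratedDeriv 2 (coilφ l γ μ 1) s = -(γ * μ ^ 2 * Real.cos (μ * s))
    rw [e1, iteratedDeriv_succ, iteratedDeriv_one]
    have h1 : deriv (fun s : ℝ => γ * Real.cos (μ * s)) =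
        fun x => -(γ * μ) * Real.sin (μ * x) := funext fun x => (hcos x).deriv
    rw [h1]
    have h2 := (((Real.hasDerivAt_sin (μ * s)).comp s (hd s)).const_mul (-(γ * μ))).deriv
    simp only [Function.comp_def] at h2
    rw [h2]; ring
  · show iteratedDeriv 2 (coilφ l γ μ 2) s = -(γ * μ ^ 2 * Real.sin (μ * s))
    rw [e2, iteratedDeriv_succ, iteratedDeriv_one]
    have h1 : deriv (fun s : ℝ => γ * Real.sin (μ * s)) =
        fun x => γ * μ * Real.cos (μ * x) := funext fun x => (hsin x).deriv
    rw [h1]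
    have h2 := (((Real.hasDerivAt_cos (μ * s)).comp s (hd s)).const_mul (γ * μ)).deriv
    simp only [Function.comp_def] at h2
    rw [h2]; ring

/-- The coiling map `ι₂ : ℝ^ν → ℝ^{ν×3}`,
`t ↦ (λ tᵢ, γ cos(μ tᵢ), γ sin(μ tᵢ))_{i}`. -/
noncomputable def coilingMap (ν : ℕ) (l γ μ : ℝ) (t : EuclideanSpace ℝ (Fin ν)) :
    EuclideanSpace ℝ (Fin ν × Fin 3) :=
  (WithLp.equiv 2 (Fin ν × Fin 3 → ℝ)).symm fun p =>
    ![l * t p.1, γ * Real.cos (μ * t p.1), γ * Real.sin (μ * t p.1)] p.2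

lemma coilingMap_contDiff (ν : ℕ) (l γ μ : ℝ) : ContDiff ℝ 2 (coilingMap ν l γ μ) := by
  rw [contDiff_euclidean]
  intro p
  exact (coilφ_contDiff l γ μ p.2).comp (EuclideanSpace.proj (𝕜 := ℝ) p.1).contDiff

lemma coilingMap_iteratedFDeriv_apply (ν : ℕ) (l γ μ : ℝ) (t v : EuclideanSpace ℝ (Fin ν))
    (p : Fin ν × Fin 3) :
    iteratedFDeriv ℝ 2 (coilingMap ν l γ μ) t ![v, v] p
      = (v p.1) ^ 2 * iteratedDeriv 2 (coilφ l γ μ p.2) (t p.1) := by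
  have hf := coilingMap_contDiff ν l γ μ
  have A := (EuclideanSpace.proj (𝕜 := ℝ) p).iteratedFDeriv_comp_left (x := t) hf.contDiffAt
    (i := 2) le_rfl
  have hcomp : (EuclideanSpace.proj (𝕜 := ℝ) p) ∘ (coilingMap ν l γ μ)
      = (coilφ l γ μ p.2) ∘ (EuclideanSpace.proj (𝕜 := ℝ) p.1) := rfl
  have B := (EuclideanSpace.proj (𝕜 := ℝ) p.1).iteratedFDeriv_comp_right
    (coilφ_contDiff l γ μ p.2) t (i := 2) le_rfl
  have lhs : iteratedFDeriv ℝ 2 (coilingMap ν l γ μ) t ![v, v] p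
      = iteratedFDeriv ℝ 2 ((EuclideanSpace.proj (𝕜 := ℝ) p) ∘ (coilingMap ν l γ μ)) t
        ![v, v] := by
    rw [A]; rfl
  rw [lhs, hcomp, B]
  have hm : (fun i : Fin 2 => (EuclideanSpace.proj (𝕜 := ℝ) p.1) (![v, v] i))
      = fun _ : Fin 2 => v p.1 := by
    funext i; fin_cases i <;> rfl
  rw [ContinuousMultilinearMap.compContinuousLinearMap_apply]
  rw [hm, iteratedFDeriv_apply_eq_iteratedDeriv_mul_prod]
  simp [pow_two]

/-- Uniform lower bound for the diagonal of the second derivative of the coiling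
map: if `γ ≠ 0` and `μ ≠ 0`, there is `C > 0` with
`‖v‖² ≤ C ‖D²ι₂(t)[v,v]‖` for all `t, v`. -/
theorem coilingMap_second_derivative_lower_bound (ν : ℕ) (hν : 1 ≤ ν) (l γ μ : ℝ)
    (hγ : γ ≠ 0) (hμ : μ ≠ 0) :
    ∃ C : ℝ, 0 < C ∧ ∀ (t v : EuclideanSpace ℝ (Fin ν)),
      ‖v‖ ^ 2 ≤ C * ‖(iteratedFDeriv ℝ 2 (coilingMap ν l γ μ) t) ![v, v]‖ := by
  have hγμ : 0 < |γ| * μ ^ 2 := by positivity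
  have hν0 : (0 : ℝ) < ν := by exact_mod_cast hν
  refine ⟨Real.sqrt ν / (|γ| * μ ^ 2), by positivity, fun t v => ?_⟩
  set w := iteratedFDeriv ℝ 2 (coilingMap ν l γ μ) t ![v, v] with hwdef
  have hw : ∀ p : Fin ν × Fin 3, w p =
      (v p.1) ^ 2 * ![0, -(γ * μ ^ 2 * Real.cos (μ * t p.1)),
        -(γ * μ ^ 2 * Real.sin (μ * t p.1))] p.2 := fun p => by
    rw [hwdef, coilingMap_iteratedFDeriv_apply, coilφ_iteratedDeriv]
  have hw2 : ‖w‖ ^ 2 = γ ^ 2 * μ ^ 4 * ∑ i, v i ^ 4 := by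
    rw [EuclideanSpace.norm_eq, Real.sq_sqrt (by positivity)]
    rw [Fintype.sum_prod_type, Finset.mul_sum]
    refine Finset.sum_congr rfl fun i _ => ?_
    rw [Fin.sum_univ_three]
    simp only [hw]
    simp only [Matrix.cons_val_zero, Matrix.cons_val_one, Matrix.head_cons,
      Matrix.cons_val_two, Matrix.tail_cons, Real.norm_eq_abs, sq_abs]
    have := Real.sin_sq_add_cos_sq (μ * t i)
    nlinarith [this]
  have hnormv : ‖v‖ ^ 2 = ∑ i, v i ^ 2 := by
    rw [EuclideanSpace.norm_eq, Real.sq_sqrt (by positivity)]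
    refine Finset.sum_congr rfl fun i _ => by rw [Real.norm_eq_abs, sq_abs]
  have cheb : (∑ i, v i ^ 2) ^ 2 ≤ ν * ∑ i, v i ^ 4 := by
    have := sq_sum_le_card_mul_sum_sq (s := Finset.univ) (f := fun i : Fin ν => v i ^ 2)
    simpa [← pow_mul] using this
  have hw' : ‖w‖ = |γ| * μ ^ 2 * Real.sqrt (∑ i, v i ^ 4) := by
    have h : ‖w‖ = Real.sqrt (‖w‖ ^ 2) := by rw [Real.sqrt_sq (norm_nonneg w)]
    rw [h, hw2]
    rw [show γ ^ 2 * μ ^ 4 * ∑ i, v i ^ 4 = (|γ| * μ ^ 2) ^ 2 * ∑ i, v i ^ 4 by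
      rw [mul_pow, sq_abs]; ring]
    rw [Real.sqrt_mul (by positivity), Real.sqrt_sq (le_of_lt hγμ)]
  rw [hw', hnormv]
  rw [show (Real.sqrt ν / (|γ| * μ ^ 2)) * (|γ| * μ ^ 2 * Real.sqrt (∑ i, v i ^ 4))
      = Real.sqrt ν * Real.sqrt (∑ i, v i ^ 4) by field_simp]
  have h1 : (∑ i, v i ^ 2) ≤ Real.sqrt (ν * ∑ i, v i ^ 4) := by
    rw [show (∑ i, v i ^ 2) = Real.sqrt ((∑ i, v i ^ 2) ^ 2) from
      (Real.sqrt_sq (by positivity)).symm]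
    exact Real.sqrt_le_sqrt cheb
  calc ∑ i, v i ^ 2 ≤ Real.sqrt (ν * ∑ i, v i ^ 4) := h1
    _ = Real.sqrt ν * Real.sqrt (∑ i, v i ^ 4) := Real.sqrt_mul (by positivity) _
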